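/- If λ is an integer-valued function on self-maps of spaces in 𝒞 satisfying the Homotopy, Cofibration, and Commutativity axioms, then λ of any constant self-map c : X → X is zero. -/

import Mathlib

open CategoryTheory AlgebraicTopology

section Homology

noncomputable def SingularChains (X : Type) [TopologicalSpace X] :
    ChainComplex (ModuleCat ℚ) ℕ :=
  (alternatingFaceMapComplex (ModuleCat ℚ)).obj
    (((SimplicialObject.whiskering _ _).obj (ModuleCat.free ℚ)).obj
      (TopCat.toSSet.obj (TopCat.of X)))

noncomputable def SingularChainsMap {X Y : Type} [TopologicalSpace X] [TopologicalSpace Y]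
    (f : C(X, Y)) : SingularChains X ⟶ SingularChains Y :=
  (alternatingFaceMapComplex (ModuleCat ℚ)).map
    (((SimplicialObject.whiskering _ _).obj (ModuleCat.free ℚ)).map
      (TopCat.toSSet.map (TopCat.ofHom f)))

lemma SingularChainsMap_comp {X Y Z : Type} [TopologicalSpace X] [TopologicalSpace Y]
    [TopologicalSpace Z] (f : C(X, Y)) (g : C(Y, Z)) :
    SingularChainsMap (g.comp f) = SingularChainsMap f ≫ SingularChainsMap g := by
  simp only [SingularChainsMap, TopCat.ofHom_comp, Functor.map_comp]
  rfl

noncomputable def SingularHomology (X : Type) [TopologicalSpace X] (n : ℕ) : ModuleCat ℚ :=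
  (SingularChains X).homology n

noncomputable def SingularHomologyMap {X Y : Type} [TopologicalSpace X] [TopologicalSpace Y]
    (f : C(X, Y)) (n : ℕ) : SingularHomology X n ⟶ SingularHomology Y n :=
  HomologicalComplex.homologyMap (SingularChainsMap f) n

noncomputable def LefschetzNumber {X : Type} [TopologicalSpace X] (f : C(X, X)) : ℚ :=
  ∑ᶠ n : ℕ, (-1 : ℚ) ^ n * LinearMap.trace ℚ (SingularHomology X n) (SingularHomologyMap f n).hom

noncomputable def ReducedLefschetzNumber {X : Type} [TopologicalSpace X] (f : C(X, X)) : ℚ :=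
  LefschetzNumber f - 1

end Homology

section Polyhedra

def IsFinitePolyhedron (X : Type) [TopologicalSpace X] : Prop :=
  ∃ (m : ℕ) (K : Geometry.SimplicialComplex ℝ (EuclideanSpace ℝ (Fin m))),
    K.faces.Finite ∧ Nonempty (X ≃ₜ K.space)

def IsPolyhedralPair (X : Type) [TopologicalSpace X] (A : Set X) : Prop :=
  ∃ (m : ℕ) (K L : Geometry.SimplicialComplex ℝ (EuclideanSpace ℝ (Fin m))),
    K.faces.Finite ∧ L.faces ⊆ K.faces ∧
      ∃ e : X ≃ₜ K.space, Subtype.val '' (e '' A) = L.space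

def InC (X : Type) [TopologicalSpace X] : Prop :=
  ConnectedSpace X ∧ ∃ (Y : Type) (_ : TopologicalSpace Y),
    IsFinitePolyhedron Y ∧ Nonempty (ContinuousMap.HomotopyEquiv X Y)

end Polyhedra

section Quotients

def restrictSelf {X : Type} [TopologicalSpace X] (f : C(X, X)) (A : Set X)
    (h : Set.MapsTo f A A) : C(A, A) :=
  ⟨h.restrict f A A, f.continuous.restrict h⟩

def collapseSetoid (X : Type) (A : Set X) : Setoid X where
  r x y := x = y ∨ (x ∈ A ∧ y ∈ A)
  iseqv := by
    refine ⟨fun x => Or.inl rfl, ?_, ?_⟩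
    · rintro x y (rfl | ⟨h1, h2⟩)
      · exact Or.inl rfl
      · exact Or.inr ⟨h2, h1⟩
    · rintro x y z (rfl | ⟨h1, h2⟩) (rfl | ⟨h3, h4⟩)
      · exact Or.inl rfl
      · exact Or.inr ⟨h3, h4⟩
      · exact Or.inr ⟨h1, h2⟩
      · exact Or.inr ⟨h1, h4⟩

def Collapse (X : Type) [TopologicalSpace X] (A : Set X) : Type :=
  Quotient (collapseSetoid X A)

instance (X : Type) [TopologicalSpace X] (A : Set X) : TopologicalSpace (Collapse X A) :=
  instTopologicalSpaceQuotient

def collapseProj (X : Type) [TopologicalSpace X] (A : Set X) : C(X, Collapse X A) :=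
  ⟨Quotient.mk _, continuous_quotient_mk'⟩

def collapseMap {X : Type} [TopologicalSpace X] {A : Set X} (f : C(X, X))
    (h : Set.MapsTo f A A) : C(Collapse X A, Collapse X A) := by
  refine ⟨Quotient.map f ?_, ?_⟩
  · rintro x y (rfl | ⟨h1, h2⟩)
    · exact Or.inl rfl
    · exact Or.inr ⟨h h1, h h2⟩
  · exact continuous_quotient_mk'.comp f.continuous |>.quotient_lift _

end Quotients

section Wedge

def Wedge (k : ℕ) (S : Type) [TopologicalSpace S] (s₀ : S) : Type :=
  {v : Fin k → S // ∀ i j : Fin k, v i ≠ s₀ → v j ≠ s₀ → i = j}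

instance (k : ℕ) (S : Type) [TopologicalSpace S] (s₀ : S) :
    TopologicalSpace (Wedge k S s₀) :=
  instTopologicalSpaceSubtype

def wedgePt (k : ℕ) (S : Type) [TopologicalSpace S] (s₀ : S) : Wedge k S s₀ :=
  ⟨fun _ => s₀, fun _ _ hi _ => absurd rfl hi⟩

def wedgeIncl (k : ℕ) (S : Type) [TopologicalSpace S] (s₀ : S) (j : Fin k) :
    C(S, Wedge k S s₀) := by
  refine ⟨fun z => ⟨Function.update (fun _ => s₀) j z, ?_⟩, ?_⟩
  · intro i i' hi hi'
    have h1 : i = j := by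
      by_contra h
      exact hi (Function.update_of_ne h _ _)
    have h2 : i' = j := by
      by_contra h
      exact hi' (Function.update_of_ne h _ _)
    rw [h1, h2]
  · refine Continuous.subtype_mk (continuous_pi fun i => ?_) _
    rcases eq_or_ne i j with rfl | h
    · simpa using continuous_id'
    · simpa [Function.update_of_ne h] using
        (continuous_const : Continuous fun _ : S => s₀)

def wedgeProj (k : ℕ) (S : Type) [TopologicalSpace S] (s₀ : S) (j : Fin k) :
    C(Wedge k S s₀, S) :=
  ⟨fun v => v.1 j, (continuous_apply j).comp continuous_subtype_val⟩

noncomputable def circleDeg (f : C(Circle, Circle)) : ℚ :=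
  LinearMap.trace ℚ (SingularHomology Circle 1) (SingularHomologyMap f 1).hom

def nSphere (n : ℕ) : Type := Metric.sphere (0 : EuclideanSpace ℝ (Fin (n + 1))) 1

noncomputable instance (n : ℕ) : TopologicalSpace (nSphere n) := by
  unfold nSphere; infer_instance

noncomputable def spherePt (n : ℕ) : nSphere n :=
  ⟨EuclideanSpace.single 0 1, by simp [EuclideanSpace.norm_single]⟩

noncomputable def sphereDeg (n : ℕ) (f : C(nSphere n, nSphere n)) : ℚ :=
  LinearMap.trace ℚ (SingularHomology (nSphere n) n) (SingularHomologyMap f n).hom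

/-- the wedge of `k` circles, with the circle realized as the unit circle in `ℂ`
with basepoint `1` -/
noncomputable def WedgeCircles (k : ℕ) : Type := Wedge k Circle 1

noncomputable instance (k : ℕ) : TopologicalSpace (WedgeCircles k) :=
  instTopologicalSpaceSubtype

end Wedge

section Axioms

def HomotopyAxiom (lam : ∀ (X : Type) [TopologicalSpace X], C(X, X) → ℚ) : Prop :=
  ∀ (X : Type) [TopologicalSpace X], InC X →
    ∀ f g : C(X, X), ContinuousMap.Homotopic f g → lam X f = lam X g

def CofibrationAxiom (lam : ∀ (X : Type) [TopologicalSpace X], C(X, X) → ℚ) : Prop :=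
  ∀ (X : Type) [TopologicalSpace X] (A : Set X), InC X → InC A → IsPolyhedralPair X A →
    ∀ (f : C(X, X)) (hf : Set.MapsTo f A A),
      lam X f = lam A (restrictSelf f A hf) + lam (Collapse X A) (collapseMap f hf)

def CommutativityAxiom (lam : ∀ (X : Type) [TopologicalSpace X], C(X, X) → ℚ) : Prop :=
  ∀ (X Y : Type) [TopologicalSpace X] [TopologicalSpace Y], InC X → InC Y →
    ∀ (f : C(X, Y)) (g : C(Y, X)), lam X (g.comp f) = lam Y (f.comp g)

def WedgeCirclesAxiom (lam : ∀ (X : Type) [TopologicalSpace X], C(X, X) → ℚ) : Prop :=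
  ∀ k : ℕ, 1 ≤ k → ∀ f : C(Wedge k Circle 1, Wedge k Circle 1),
    lam (Wedge k Circle 1) f =
      -(∑ j : Fin k,
          circleDeg ((wedgeProj k Circle 1 j).comp (f.comp (wedgeIncl k Circle 1 j))))

/-- view an integer-valued function on self-maps as a rational-valued one -/
def intValued (lam : ∀ (X : Type) [TopologicalSpace X], C(X, X) → ℤ) :
    ∀ (X : Type) [TopologicalSpace X], C(X, X) → ℚ :=
  fun X _ f => (lam X f : ℚ)

end Axioms

section Susp

def Susp (X : Type) [TopologicalSpace X] (x₀ : X) : Type :=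
  Collapse (X × unitInterval) {p : X × unitInterval | p.2 = 0 ∨ p.2 = 1 ∨ p.1 = x₀}

instance (X : Type) [TopologicalSpace X] (x₀ : X) : TopologicalSpace (Susp X x₀) :=
  instTopologicalSpaceQuotient

def suspMap {X : Type} [TopologicalSpace X] {x₀ : X} (f : C(X, X)) (hf : f x₀ = x₀) :
    C(Susp X x₀, Susp X x₀) := by
  refine collapseMap (f.prodMap (ContinuousMap.id unitInterval)) ?_
  rintro ⟨x, t⟩ (h | h | h)
  · exact Or.inl h
  · exact Or.inr (Or.inl h)
  · refine Or.inr (Or.inr ?_)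
    show f x = x₀
    rw [show x = x₀ from h, hf]

end Susp

section Index

structure FixedPointIndexTheory where
  /-- the fixed point index `i(X, f, U)` -/
  index : ∀ (X : Type) [TopologicalSpace X], C(X, X) → Set X → ℤ
  /-- Homotopy property -/
  homotopy : ∀ (X : Type) [TopologicalSpace X], IsFinitePolyhedron X →
    ∀ f g : C(X, X), f.Homotopic g → index X f Set.univ = index X g Set.univ
  /-- a map with no fixed points in `U` has index zero on `U` -/
  noFix : ∀ (X : Type) [TopologicalSpace X], IsFinitePolyhedron X →
    ∀ (f : C(X, X)) (U : Set X), IsOpen U → (∀ x ∈ U, f x ≠ x) → index X f U = 0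
  /-- Additivity property -/
  additivity : ∀ (X : Type) [TopologicalSpace X], IsFinitePolyhedron X →
    ∀ (f : C(X, X)) (W : Set X) (ι : Type) (_ : Finite ι) (U : ι → Set X),
      IsOpen W → (∀ i, IsOpen (U i)) → Pairwise (Function.onFun Disjoint U) →
      (∀ i, U i ⊆ W) → (∀ x ∈ W, f x = x → ∃ i, x ∈ U i) →
      index X f W = ∑ᶠ i, index X f (U i)
  /-- Excision property -/
  excision : ∀ (X : Type) [TopologicalSpace X], IsFinitePolyhedron X →
    ∀ (f : C(X, X)) (U V : Set X), IsOpen U → IsOpen V → V ⊆ U →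
      (∀ x ∈ U, f x = x → x ∈ V) → index X f U = index X f V
  /-- Commutativity property -/
  commutativity : ∀ (X Y : Type) [TopologicalSpace X] [TopologicalSpace Y],
    IsFinitePolyhedron X → IsFinitePolyhedron Y →
    ∀ (f : C(X, Y)) (g : C(Y, X)),
      index X (g.comp f) Set.univ = index Y (f.comp g) Set.univ

end Index

section Relative

noncomputable def setIncl {X : Type} [TopologicalSpace X] (A : Set X) : C(A, X) :=
  ⟨Subtype.val, continuous_subtype_val⟩

noncomputable def RelChains (X : Type) [TopologicalSpace X] (A : Set X) :
    ChainComplex (ModuleCat ℚ) ℕ :=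
  Limits.cokernel (SingularChainsMap (setIncl A))

noncomputable def RelHomology (X : Type) [TopologicalSpace X] (A : Set X) (n : ℕ) :
    ModuleCat ℚ :=
  (RelChains X A).homology n

noncomputable def RelHomologyMap {X : Type} [TopologicalSpace X] {A : Set X} (f : C(X, X))
    (hf : Set.MapsTo f A A) (n : ℕ) : RelHomology X A n ⟶ RelHomology X A n :=
  HomologicalComplex.homologyMap
    (Limits.cokernel.map _ _ (SingularChainsMap (restrictSelf f A hf)) (SingularChainsMap f)
      (by
        rw [← SingularChainsMap_comp, ← SingularChainsMap_comp]
        congr 1)) n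

noncomputable def RelLefschetzNumber {X : Type} [TopologicalSpace X] {A : Set X} (f : C(X, X))
    (hf : Set.MapsTo f A A) : ℚ :=
  ∑ᶠ n : ℕ, (-1 : ℚ) ^ n * LinearMap.trace ℚ (RelHomology X A n) (RelHomologyMap f hf n).hom

end Relative



section PointHelpers

theorem subsingleton_cmap {P Q : Type} [TopologicalSpace P] [TopologicalSpace Q]
    [Subsingleton Q] : Subsingleton C(P, Q) :=
  ⟨fun f g => by ext x; exact Subsingleton.elim _ _⟩

theorem homotopic_of_sub {P Q : Type} [TopologicalSpace P] [TopologicalSpace Q]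
    [Subsingleton Q] (f g : C(P, Q)) : f.Homotopic g := by
  rw [@Subsingleton.elim C(P, Q) subsingleton_cmap f g]

noncomputable def homeoSub (P Q : Type) [TopologicalSpace P] [TopologicalSpace Q]
    [Subsingleton P] [Subsingleton Q] [Nonempty P] [Nonempty Q] : P ≃ₜ Q where
  toFun := fun _ => Classical.arbitrary Q
  invFun := fun _ => Classical.arbitrary P
  left_inv := fun _ => Subsingleton.elim _ _
  right_inv := fun _ => Subsingleton.elim _ _
  continuous_toFun := continuous_const
  continuous_invFun := continuous_const

noncomputable def ptComplex : Geometry.SimplicialComplex ℝ (EuclideanSpace ℝ (Fin 0)) where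
  faces := {{0}}
  isRelLowerSet_faces := by
    rintro s hs
    simp only [Set.mem_singleton_iff] at hs ⊢
    subst hs
    refine ⟨Finset.singleton_nonempty 0, fun t hts ht => ?_⟩
    rcases Finset.subset_singleton_iff.mp hts with rfl | rfl
    · exact absurd ht (by simp)
    · rfl
  indep := by
    rintro s hs
    exact affineIndependent_of_subsingleton ℝ _
  inter_subset_convexHull := by
    rintro s t hs ht
    simp only [Set.mem_singleton_iff] at hs ht
    subst hs; subst ht
    simp

theorem ptComplex_space : ptComplex.space = {0} := by
  simp [Geometry.SimplicialComplex.space, ptComplex]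

instance : Nonempty ↥ptComplex.space := ⟨⟨0, by rw [ptComplex_space]; rfl⟩⟩

theorem isFinitePolyhedron_of_subsingleton (P : Type) [TopologicalSpace P]
    [Subsingleton P] [Nonempty P] : IsFinitePolyhedron P :=
  ⟨0, ptComplex, by simp [ptComplex], ⟨homeoSub P _⟩⟩

theorem inC_of_subsingleton (P : Type) [TopologicalSpace P] [Subsingleton P] [Nonempty P] :
    InC P := by
  refine ⟨{ toPreconnectedSpace := ⟨Set.subsingleton_univ.isPreconnected⟩,
            toNonempty := ‹Nonempty P› }, Unit, inferInstance,
    isFinitePolyhedron_of_subsingleton Unit, ⟨?_⟩⟩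
  exact
    { toFun := ContinuousMap.const _ ()
      invFun := ContinuousMap.const _ (Classical.arbitrary P)
      left_inv := homotopic_of_sub _ _
      right_inv := homotopic_of_sub _ _ }

theorem isPolyhedralPair_unit : IsPolyhedralPair Unit (Set.univ : Set Unit) := by
  refine ⟨0, ptComplex, ptComplex, by simp [ptComplex], subset_rfl, homeoSub Unit _, ?_⟩
  rw [Set.image_univ, Set.range_eq_univ.mpr (homeoSub Unit _).surjective]
  exact Subtype.coe_image_univ _

instance : Subsingleton (Collapse Unit Set.univ) := by
  unfold Collapse
  constructor
  rintro ⟨a⟩ ⟨b⟩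
  exact congrArg _ (Subsingleton.elim a b)

instance : Nonempty (Collapse Unit Set.univ) := ⟨collapseProj Unit Set.univ ()⟩

theorem lam_unit_eq_zero
    (lam : ∀ (X : Type) [TopologicalSpace X], C(X, X) → ℤ)
    (h2 : CofibrationAxiom (intValued lam)) (h3 : CommutativityAxiom (intValued lam)) :
    lam Unit (ContinuousMap.id Unit) = 0 := by
  have hCU : InC Unit := inC_of_subsingleton Unit
  have hA : InC ↥(Set.univ : Set Unit) := inC_of_subsingleton _
  have hC : InC (Collapse Unit Set.univ) := inC_of_subsingleton _
  have hf : Set.MapsTo (ContinuousMap.id Unit) Set.univ Set.univ := fun x _ => trivial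
  have key := h2 Unit Set.univ hCU hA isPolyhedralPair_unit (ContinuousMap.id Unit) hf
  set p : ↥(Set.univ : Set Unit) := ⟨(), trivial⟩ with hp
  have hcomm1 := h3 Unit ↥(Set.univ : Set Unit) hCU hA
    (ContinuousMap.const Unit p) (ContinuousMap.const _ ())
  have hcomm2 := h3 Unit (Collapse Unit Set.univ) hCU hC
    (collapseProj Unit Set.univ) (ContinuousMap.const _ ())
  have e1 : restrictSelf (ContinuousMap.id Unit) Set.univ hf =
      (ContinuousMap.const Unit p).comp (ContinuousMap.const _ ()) :=
    @Subsingleton.elim _ subsingleton_cmap _ _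
  have e2 : collapseMap (ContinuousMap.id Unit) hf =
      (collapseProj Unit Set.univ).comp (ContinuousMap.const _ ()) :=
    @Subsingleton.elim _ subsingleton_cmap _ _
  have e3 : (ContinuousMap.const ↥(Set.univ : Set Unit) ()).comp (ContinuousMap.const Unit p) =
      ContinuousMap.id Unit := @Subsingleton.elim _ subsingleton_cmap _ _
  have e4 : (ContinuousMap.const (Collapse Unit Set.univ) ()).comp (collapseProj Unit Set.univ) =
      ContinuousMap.id Unit := @Subsingleton.elim _ subsingleton_cmap _ _
  rw [e1, e2, ← hcomm1, ← hcomm2, e3, e4] at key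
  simp only [intValued] at key
  have : (lam Unit (ContinuousMap.id Unit) : ℚ) = 0 := by linarith
  exact_mod_cast this

end PointHelpers


/-- If `λ` is an integer-valued function on self-maps of spaces in `𝒞` satisfying the Homotopy,
Cofibration and Commutativity axioms, then `λ` of any constant self-map is zero. -/
theorem lam_const_eq_zero
    (lam : ∀ (X : Type) [TopologicalSpace X], C(X, X) → ℤ)
    (h1 : HomotopyAxiom (intValued lam)) (h2 : CofibrationAxiom (intValued lam))
    (h3 : CommutativityAxiom (intValued lam))
    (X : Type) [TopologicalSpace X] (hX : InC X) (x₀ : X) :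
    lam X (ContinuousMap.const X x₀) = 0 := by
  have hCU : InC Unit := inC_of_subsingleton Unit
  have hcomm := h3 X Unit hX hCU (ContinuousMap.const X ()) (ContinuousMap.const Unit x₀)
  have e1 : (ContinuousMap.const Unit x₀).comp (ContinuousMap.const X ()) =
      ContinuousMap.const X x₀ := by ext x; rfl
  have e2 : (ContinuousMap.const X ()).comp (ContinuousMap.const Unit x₀) =
      ContinuousMap.id Unit := @Subsingleton.elim _ subsingleton_cmap _ _
  rw [e1, e2] at hcomm
  simp only [intValued] at hcomm
  have hz := lam_unit_eq_zero lam h2 h3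
  rw [hz] at hcomm
  exact_mod_cast hcomm
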